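/- arXiv:1910.02566 — 3 statements merged into one kernel-verified Lean document; each statement's English description precedes it below -/
import Mathlib

section
/- Let X be a random vector in R^d with distribution N(0, Σ), where Σ is diagonal with diagonal entries σ_1^2 > σ_2^2 ≥ σ_3^2 ≥ ... ≥ σ_d^2 > 0. With the centers μ_1 = (−σ_1√(2/π), 0, ..., 0) and μ_2 = (σ_1√(2/π), 0, ..., 0), the population 2-means objective satisfies E[min(‖X − μ_1‖^2, ‖X − μ_2‖^2)] = (Σ_{i=1}^d σ_i^2) − 2σ_1^2/π. -/
open MeasureTheory ProbabilityTheory Real Filter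
open scoped ENNReal NNReal Topology RealInnerProductSpace

noncomputable section

/-- The multivariate Gaussian measure on `EuclideanSpace ℝ (Fin d)` with mean `m` and
diagonal covariance matrix with diagonal entries `v i` (the variances). -/
def diagGaussian (d : ℕ) (m : Fin d → ℝ) (v : Fin d → ℝ≥0) :
    Measure (EuclideanSpace ℝ (Fin d)) :=
  (Measure.pi fun i => gaussianReal (m i) (v i)).map
    (MeasurableEquiv.toLp 2 (Fin d → ℝ))

/-- The two-component Gaussian mixture `(1/2) N(-θ, D) + (1/2) N(θ, D)` with `D = diag v`. -/
def mixGaussian (d : ℕ) (θ : Fin d → ℝ) (v : Fin d → ℝ≥0) :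
    Measure (EuclideanSpace ℝ (Fin d)) :=
  (2⁻¹ : ℝ≥0∞) • diagGaussian d (fun i => -θ i) v + (2⁻¹ : ℝ≥0∞) • diagGaussian d θ v

/-- Conditional expectation `E[f(X) | X ∈ A]` of a real-valued function given an event. -/
def condMean {Ω : Type*} [MeasurableSpace Ω] (μ : Measure Ω) (A : Set Ω) (f : Ω → ℝ) : ℝ :=
  (∫ x in A, f x ∂μ) / (μ A).toReal

/-- Conditional expectation `E[f(X) | X ∈ A]` of a vector-valued function given an event. -/
def condMeanVec {Ω : Type*} [MeasurableSpace Ω] (μ : Measure Ω) (A : Set Ω)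
    {F : Type*} [NormedAddCommGroup F] [NormedSpace ℝ F] (f : Ω → F) : F :=
  ((μ A).toReal)⁻¹ • ∫ x in A, f x ∂μ

/-- The standard normal cumulative distribution function. -/
def stdCDF (t : ℝ) : ℝ := (gaussianReal 0 1 (Set.Iic t)).toReal

/-- Population within-cluster sum of squares of symmetric 2-means with centers `t, -t`. -/
def WpopSym {d : ℕ} (P : Measure (EuclideanSpace ℝ (Fin d)))
    (t : EuclideanSpace ℝ (Fin d)) : ℝ :=
  ∫ x, min (‖x - t‖^2) (‖x + t‖^2) ∂P



section SigClustAux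
open Set

lemma integral_Ioi_mul_exp_neg_mul_sq {b : ℝ} (hb : 0 < b) :
    ∫ x in Ioi (0:ℝ), x * rexp (-b * x ^ 2) = (2 * b)⁻¹ := by
  have hb' : b ≠ 0 := hb.ne'
  have A : ∀ x : ℝ, HasDerivAt (fun x => -(2 * b)⁻¹ * rexp (-b * x ^ 2))
      (x * rexp (-b * x ^ 2)) x := by
    intro x
    refine (((hasDerivAt_pow 2 x).const_mul (-b)).exp.const_mul (-(2 * b)⁻¹)).congr_deriv ?_
    field_simp
    ring
  have B : Tendsto (fun y : ℝ ↦ -(2 * b)⁻¹ * rexp (-b * y ^ 2))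
      atTop (𝓝 (-(2 * b)⁻¹ * 0)) := by
    refine Tendsto.const_mul _ ?_
    apply Real.tendsto_exp_atBot.comp
    exact (tendsto_pow_atTop two_ne_zero).const_mul_atTop_of_neg (neg_lt_zero.2 hb)
  have := integral_Ioi_of_hasDerivAt_of_tendsto' (a := 0) (fun x _ => A x)
    (integrable_mul_exp_neg_mul_sq hb).integrableOn B
  rw [this]
  simp

lemma integrable_sq_mul_exp_neg_mul_sq {b : ℝ} (hb : 0 < b) :
    Integrable (fun x : ℝ => x ^ 2 * rexp (-b * x ^ 2)) := by
  have := integrable_rpow_mul_exp_neg_mul_sq hb (s := 2) (by norm_num)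
  simpa [Real.rpow_natCast] using this

lemma tendsto_mul_exp_neg_mul_sq {b : ℝ} (hb : 0 < b) :
    Tendsto (fun x : ℝ => x * rexp (-b * x ^ 2)) atTop (𝓝 0) := by
  have h := rpow_mul_exp_neg_mul_sq_isLittleO_exp_neg hb 1
  simp only [Real.rpow_one] at h
  exact h.isBigO.trans_tendsto (tendsto_exp_atBot.comp (tendsto_id.const_mul_atTop_of_neg (by norm_num)))

lemma integral_Ioi_sq_mul_exp_neg_mul_sq {b : ℝ} (hb : 0 < b) :
    ∫ x in Ioi (0:ℝ), x ^ 2 * rexp (-b * x ^ 2) = √(π / b) / (4 * b) := by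
  have hb' : b ≠ 0 := hb.ne'
  have A : ∀ x : ℝ, HasDerivAt (fun x : ℝ => x * rexp (-b * x ^ 2))
      (rexp (-b * x ^ 2) - 2 * b * (x ^ 2 * rexp (-b * x ^ 2))) x := by
    intro x
    have h1 : HasDerivAt (fun x : ℝ => rexp (-b * x ^ 2))
        (rexp (-b * x ^ 2) * (-b * (2 * x ^ 1))) x :=
      ((hasDerivAt_pow 2 x).const_mul (-b)).exp
    have := (hasDerivAt_id x).mul h1
    refine this.congr_deriv ?_
    simp only [pow_one, id_eq]
    ring
  have hint : IntegrableOn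
      (fun x : ℝ => rexp (-b * x ^ 2) - 2 * b * (x ^ 2 * rexp (-b * x ^ 2))) (Ioi 0) := by
    exact ((integrable_exp_neg_mul_sq hb).sub
      ((integrable_sq_mul_exp_neg_mul_sq hb).const_mul _)).integrableOn
  have B := integral_Ioi_of_hasDerivAt_of_tendsto' (a := 0) (fun x _ => A x) hint
    (tendsto_mul_exp_neg_mul_sq hb)
  have hsub : (∫ x in Ioi (0:ℝ), (rexp (-b * x ^ 2) - 2 * b * (x ^ 2 * rexp (-b * x ^ 2))))
      = (∫ x in Ioi (0:ℝ), rexp (-b * x ^ 2))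
        - 2 * b * ∫ x in Ioi (0:ℝ), x ^ 2 * rexp (-b * x ^ 2) := by
    rw [integral_sub ((integrable_exp_neg_mul_sq hb).integrableOn)
      (((integrable_sq_mul_exp_neg_mul_sq hb).const_mul _).integrableOn), integral_const_mul]
  rw [hsub] at B
  norm_num at B
  simp only [← neg_mul] at B
  rw [integral_gaussian_Ioi b] at B
  have h2 : 2 * b * ∫ x in Ioi (0:ℝ), x ^ 2 * rexp (-b * x ^ 2) = √(π / b) / 2 := by
    linarith
  field_simp at h2 ⊢
  linarith

lemma integral_abs_mul_exp_neg_mul_sq {b : ℝ} (hb : 0 < b) :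
    ∫ x : ℝ, |x| * rexp (-b * x ^ 2) = b⁻¹ := by
  have h := integral_comp_abs (f := fun x : ℝ => x * rexp (-b * x ^ 2))
  simp only [sq_abs] at h
  rw [h, integral_Ioi_mul_exp_neg_mul_sq hb]
  field_simp

lemma integral_sq_mul_exp_neg_mul_sq {b : ℝ} (hb : 0 < b) :
    ∫ x : ℝ, x ^ 2 * rexp (-b * x ^ 2) = √(π / b) / (2 * b) := by
  have h := integral_comp_abs (f := fun x : ℝ => x ^ 2 * rexp (-b * x ^ 2))
  simp only [sq_abs] at h
  rw [h, integral_Ioi_sq_mul_exp_neg_mul_sq hb]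
  field_simp
  ring

lemma gaussianReal_withDensity (v : ℝ≥0) (hv : v ≠ 0) :
    gaussianReal 0 v
      = volume.withDensity (fun x => ((gaussianPDFReal 0 v x).toNNReal : ℝ≥0∞)) := by
  rw [gaussianReal_of_var_ne_zero 0 hv]
  rfl

lemma integral_gaussianReal_eq (v : ℝ≥0) (hv : v ≠ 0) (g : ℝ → ℝ) :
    ∫ x, g x ∂(gaussianReal 0 v) = ∫ x, gaussianPDFReal 0 v x * g x := by
  rw [gaussianReal_withDensity v hv,
    integral_withDensity_eq_integral_smul (measurable_gaussianPDFReal 0 v).real_toNNReal g]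
  refine integral_congr_ae (Filter.Eventually.of_forall fun x => ?_)
  simp only [NNReal.smul_def, Real.coe_toNNReal _ (gaussianPDFReal_nonneg 0 v x), smul_eq_mul]

lemma integrable_gaussianReal_iff (v : ℝ≥0) (hv : v ≠ 0) (g : ℝ → ℝ) :
    Integrable g (gaussianReal 0 v)
      ↔ Integrable (fun x => gaussianPDFReal 0 v x * g x) volume := by
  rw [gaussianReal_withDensity v hv,
    integrable_withDensity_iff_integrable_smul (measurable_gaussianPDFReal 0 v).real_toNNReal]
  refine integrable_congr (Filter.Eventually.of_forall fun x => ?_)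
  simp only [NNReal.smul_def, Real.coe_toNNReal _ (gaussianPDFReal_nonneg 0 v x), smul_eq_mul]

lemma gaussianPDFReal_zero_mean (v : ℝ≥0) (x : ℝ) :
    gaussianPDFReal 0 v x = (√(2 * π * ↑v))⁻¹ * rexp (-(2 * (v:ℝ))⁻¹ * x ^ 2) := by
  rw [gaussianPDFReal]
  congr 1
  rw [sub_zero]
  ring

variable {v : ℝ≥0}

lemma hbpos (hv : v ≠ 0) : 0 < (2 * (v:ℝ))⁻¹ := by
  have : 0 < (v:ℝ) := by positivity
  positivity

lemma integrable_abs_gaussianReal (hv : v ≠ 0) :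
    Integrable (fun x : ℝ => |x|) (gaussianReal 0 v) := by
  rw [integrable_gaussianReal_iff v hv]
  have hb := hbpos hv
  have h : Integrable (fun x : ℝ => (√(2 * π * ↑v))⁻¹ *
      (|x| * rexp (-(2 * (v:ℝ))⁻¹ * x ^ 2))) volume := by
    refine Integrable.const_mul ?_ _
    have := (integrable_mul_exp_neg_mul_sq hb).abs
    refine this.congr (Filter.Eventually.of_forall fun x => ?_)
    simp only [abs_mul, abs_of_nonneg (Real.exp_pos _).le]
  refine h.congr (Filter.Eventually.of_forall fun x => ?_)
  simp only [gaussianPDFReal_zero_mean]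
  ring

lemma integrable_sq_gaussianReal (hv : v ≠ 0) :
    Integrable (fun x : ℝ => x ^ 2) (gaussianReal 0 v) := by
  rw [integrable_gaussianReal_iff v hv]
  have hb := hbpos hv
  have h : Integrable (fun x : ℝ => (√(2 * π * ↑v))⁻¹ *
      (x ^ 2 * rexp (-(2 * (v:ℝ))⁻¹ * x ^ 2))) volume := by
    refine Integrable.const_mul ?_ _
    have := integrable_rpow_mul_exp_neg_mul_sq hb (s := 2) (by norm_num)
    simpa [Real.rpow_natCast] using this
  refine h.congr (Filter.Eventually.of_forall fun x => ?_)
  simp only [gaussianPDFReal_zero_mean]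
  ring

lemma sqrt_two_pi_v_pos (hv : v ≠ 0) : 0 < √(2 * π * ↑v) := by
  have : 0 < (v:ℝ) := by positivity
  positivity

lemma integral_abs_gaussianReal (hv : v ≠ 0) :
    ∫ x, |x| ∂(gaussianReal 0 v) = √(v:ℝ) * √(2 / π) := by
  have hb := hbpos hv
  have hv0 : 0 < (v:ℝ) := by positivity
  rw [integral_gaussianReal_eq v hv]
  calc ∫ x, gaussianPDFReal 0 v x * |x|
      = ∫ x, (√(2 * π * ↑v))⁻¹ * (|x| * rexp (-(2 * (v:ℝ))⁻¹ * x ^ 2)) := by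
        refine integral_congr_ae (Filter.Eventually.of_forall fun x => ?_)
        simp only [gaussianPDFReal_zero_mean]; ring
    _ = (√(2 * π * ↑v))⁻¹ * ((2 * (v:ℝ))⁻¹)⁻¹ := by
        rw [integral_const_mul, integral_abs_mul_exp_neg_mul_sq hb]
    _ = √(v:ℝ) * √(2 / π) := by
        have h1 : √(v:ℝ) * √(2 / π) * √(2 * π * ↑v) = 2 * v := by
          rw [← Real.sqrt_mul hv0.le, ← Real.sqrt_mul (by positivity),
            show (v:ℝ) * (2 / π) * (2 * π * ↑v) = (2 * v) ^ 2 by field_simp]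
          exact Real.sqrt_sq (by positivity)
        rw [inv_inv, inv_mul_eq_div, div_eq_iff (sqrt_two_pi_v_pos hv).ne']
        linarith [h1]

lemma integral_sq_gaussianReal (hv : v ≠ 0) :
    ∫ x, x ^ 2 ∂(gaussianReal 0 v) = (v : ℝ) := by
  have hb := hbpos hv
  have hv0 : 0 < (v:ℝ) := by positivity
  rw [integral_gaussianReal_eq v hv]
  calc ∫ x, gaussianPDFReal 0 v x * x ^ 2
      = ∫ x, (√(2 * π * ↑v))⁻¹ * (x ^ 2 * rexp (-(2 * (v:ℝ))⁻¹ * x ^ 2)) := by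
        refine integral_congr_ae (Filter.Eventually.of_forall fun x => ?_)
        simp only [gaussianPDFReal_zero_mean]; ring
    _ = (√(2 * π * ↑v))⁻¹ * (√(π / (2 * (v:ℝ))⁻¹) / (2 * (2 * (v:ℝ))⁻¹)) := by
        rw [integral_const_mul, integral_sq_mul_exp_neg_mul_sq hb]
    _ = (v : ℝ) := by
        have h2 := sqrt_two_pi_v_pos hv
        rw [show π / (2 * (v:ℝ))⁻¹ = 2 * π * ↑v by field_simp,
          show 2 * (2 * (v:ℝ))⁻¹ = (v:ℝ)⁻¹ by field_simp]
        field_simp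

lemma pi_map_eval {ι : Type*} [Fintype ι] [DecidableEq ι] {α : ι → Type*} [∀ i, MeasurableSpace (α i)]
    (μ : ∀ i, Measure (α i)) [∀ i, IsProbabilityMeasure (μ i)] (i : ι) :
    (Measure.pi μ).map (Function.eval i) = μ i := by
  refine Measure.ext fun s hs => ?_
  rw [Measure.map_apply (measurable_pi_apply i) hs]
  have : Function.eval i ⁻¹' s = Set.pi Set.univ (Function.update (fun j => (univ : Set (α j))) i s) := by
    ext x
    simp only [Set.mem_preimage, Set.mem_pi, Set.mem_univ, true_implies]
    constructor
    · intro hx j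
      rcases eq_or_ne j i with rfl | hj
      · simpa using hx
      · simp [Function.update_of_ne hj]
    · intro hx
      simpa using hx i
  rw [this, Measure.pi_pi]
  rw [Finset.prod_eq_single i]
  · simp
  · intro j _ hj
    simp [Function.update_of_ne hj]
  · simp

lemma measurePreserving_eval {ι : Type*} [Fintype ι] [DecidableEq ι] {α : ι → Type*}
    [∀ i, MeasurableSpace (α i)]
    (μ : ∀ i, Measure (α i)) [∀ i, IsProbabilityMeasure (μ i)] (i : ι) :
    MeasurePreserving (Function.eval i) (Measure.pi μ) (μ i) :=
  ⟨measurable_pi_apply i, pi_map_eval μ i⟩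

lemma integral_eval {ι : Type*} [Fintype ι] [DecidableEq ι] {α : ι → Type*} [∀ i, MeasurableSpace (α i)]
    (μ : ∀ i, Measure (α i)) [∀ i, IsProbabilityMeasure (μ i)] (i : ι)
    (g : α i → ℝ) (hg : AEStronglyMeasurable g (μ i)) :
    ∫ x, g (x i) ∂(Measure.pi μ) = ∫ y, g y ∂(μ i) := by
  conv_rhs => rw [← pi_map_eval μ i]
  rw [integral_map (measurable_pi_apply i).aemeasurable
    (by rw [pi_map_eval μ i]; exact hg)]

lemma integrable_eval {ι : Type*} [Fintype ι] [DecidableEq ι] {α : ι → Type*} [∀ i, MeasurableSpace (α i)]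
    (μ : ∀ i, Measure (α i)) [∀ i, IsProbabilityMeasure (μ i)] (i : ι)
    (g : α i → ℝ) (hg : AEStronglyMeasurable g (μ i)) (hg2 : Integrable g (μ i)) :
    Integrable (fun x => g (x i)) (Measure.pi μ) := by
  have := (integrable_map_measure (by rw [pi_map_eval μ i]; exact hg)
    (measurable_pi_apply i).aemeasurable).mp (by rwa [pi_map_eval μ i])
  exact this

end SigClustAux

/-- For `X ~ N(0, Σ)` with `Σ = diag(σ₁² > σ₂² ≥ ⋯ ≥ σ_d² > 0)`, and
centers `μ₁ = (-σ₁√(2/π), 0, …, 0)`, `μ₂ = -μ₁`, the population 2-means objective equals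
`∑ᵢ σᵢ² - 2σ₁²/π`. -/
theorem sigclust_null_population_objective (d : ℕ) (v : Fin (d+2) → ℝ≥0)
    (hpos : ∀ i, 0 < v i)
    (hmono : ∀ i j : Fin (d+2), i ≤ j → v j ≤ v i)
    (hstrict : v 1 < v 0) :
    let μ1 : EuclideanSpace ℝ (Fin (d+2)) :=
      EuclideanSpace.single 0 (-(Real.sqrt (v 0) * Real.sqrt (2/π)))
    let μ2 : EuclideanSpace ℝ (Fin (d+2)) :=
      EuclideanSpace.single 0 (Real.sqrt (v 0) * Real.sqrt (2/π))
    ∫ x, min (‖x - μ1‖^2) (‖x - μ2‖^2) ∂(diagGaussian (d+2) 0 v)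
      = (∑ i, (v i : ℝ)) - 2 * (v 0 : ℝ) / π := by
  intro μ1 μ2
  set c : ℝ := Real.sqrt (v 0) * Real.sqrt (2/π) with hc_def
  have hc : 0 ≤ c := by positivity
  set P : Fin (d+2) → Measure ℝ := fun i => gaussianReal 0 (v i) with hP
  have hvne : ∀ i, v i ≠ 0 := fun i => (hpos i).ne'
  -- Step 1: rewrite as integral over pi measure
  have hmap : ∫ x, min (‖x - μ1‖^2) (‖x - μ2‖^2) ∂(diagGaussian (d+2) 0 v)
      = ∫ x : Fin (d+2) → ℝ,
          min (‖(MeasurableEquiv.toLp 2 (Fin (d+2) → ℝ)) x - μ1‖^2)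
              (‖(MeasurableEquiv.toLp 2 (Fin (d+2) → ℝ)) x - μ2‖^2)
          ∂(Measure.pi P) := by
    rw [diagGaussian, integral_map_equiv]
    rfl
  rw [hmap]
  -- Step 2: pointwise identity
  have hpt : ∀ x : Fin (d+2) → ℝ,
      min (‖(MeasurableEquiv.toLp 2 (Fin (d+2) → ℝ)) x - μ1‖^2)
          (‖(MeasurableEquiv.toLp 2 (Fin (d+2) → ℝ)) x - μ2‖^2)
      = (∑ i, (x i)^2) + c^2 - 2 * c * |x 0| := by
    intro x
    have hnorm : ∀ t : ℝ,
        ‖(MeasurableEquiv.toLp 2 (Fin (d+2) → ℝ)) x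
          - EuclideanSpace.single (0 : Fin (d+2)) t‖^2
        = (∑ i, (x i)^2) + t^2 - 2 * t * x 0 := by
      intro t
      rw [EuclideanSpace.norm_eq, Real.sq_sqrt (by positivity)]
      have hcoord : ∀ i, ((MeasurableEquiv.toLp 2 (Fin (d+2) → ℝ)) x
          - EuclideanSpace.single (0 : Fin (d+2)) t) i
          = x i - (if i = 0 then t else 0) := by
        intro i
        simp [EuclideanSpace.single_apply]
      simp_rw [Real.norm_eq_abs, sq_abs, hcoord]
      rw [Finset.sum_eq_sum_sdiff_singleton_add (Finset.mem_univ (0 : Fin (d+2)))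
          (fun i => (x i - if i = 0 then t else 0)^2),
        Finset.sum_eq_sum_sdiff_singleton_add (Finset.mem_univ (0 : Fin (d+2)))
          (fun i => (x i)^2)]
      have : ∑ i ∈ Finset.univ \ {0}, (x i - if i = 0 then t else 0)^2
          = ∑ i ∈ Finset.univ \ {0}, (x i)^2 := by
        refine Finset.sum_congr rfl fun i hi => ?_
        rw [Finset.mem_sdiff, Finset.mem_singleton] at hi
        simp [hi.2]
      rw [this]
      simp only [if_pos rfl, if_true]
      ring
    have h1 : ‖(MeasurableEquiv.toLp 2 (Fin (d+2) → ℝ)) x - μ1‖^2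
        = (∑ i, (x i)^2) + c^2 + 2 * c * x 0 := by
      rw [show μ1 = EuclideanSpace.single (0 : Fin (d+2)) (-c) from rfl, hnorm (-c)]
      ring
    have h2 : ‖(MeasurableEquiv.toLp 2 (Fin (d+2) → ℝ)) x - μ2‖^2
        = (∑ i, (x i)^2) + c^2 - 2 * c * x 0 := by
      rw [show μ2 = EuclideanSpace.single (0 : Fin (d+2)) c from rfl, hnorm c]
    rw [h1, h2]
    rcases abs_cases (x 0) with ⟨habs, hsign⟩ | ⟨habs, hsign⟩
    · rw [habs, min_eq_right (by nlinarith)]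
    · rw [habs, min_eq_left (by nlinarith)]
      ring
  rw [integral_congr_ae (Filter.Eventually.of_forall hpt)]
  -- Step 3: compute the integral
  have hprob : ∀ i, IsProbabilityMeasure (P i) := fun i => by
    rw [hP]; infer_instance
  have hint_sq : ∀ i : Fin (d+2), Integrable (fun x : Fin (d+2) → ℝ => (x i)^2)
      (Measure.pi P) := fun i =>
    integrable_eval P i (fun y => y^2) (by fun_prop) (integrable_sq_gaussianReal (hvne i))
  have hint_abs : Integrable (fun x : Fin (d+2) → ℝ => |x 0|) (Measure.pi P) :=
    integrable_eval P 0 (fun y => |y|) continuous_abs.aestronglyMeasurable (integrable_abs_gaussianReal (hvne 0))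
  have hint_sum : Integrable (fun x : Fin (d+2) → ℝ => ∑ i, (x i)^2) (Measure.pi P) := by
    apply integrable_finset_sum
    intro i _
    exact hint_sq i
  have hA : Integrable (fun x : Fin (d+2) → ℝ => (∑ i, (x i)^2) + c^2) (Measure.pi P) :=
    hint_sum.add (integrable_const _)
  have hB : Integrable (fun x : Fin (d+2) → ℝ => 2 * c * |x 0|) (Measure.pi P) :=
    hint_abs.const_mul _
  rw [integral_sub hA hB,
    integral_add hint_sum (integrable_const _), integral_finset_sum _ (fun i _ => hint_sq i),
    integral_const, integral_const_mul]
  have hsq : ∀ i, ∫ x : Fin (d+2) → ℝ, (x i)^2 ∂(Measure.pi P) = (v i : ℝ) := fun i => by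
    rw [integral_eval P i (fun y => y^2) (by fun_prop)]
    exact integral_sq_gaussianReal (hvne i)
  have habs : ∫ x : Fin (d+2) → ℝ, |x 0| ∂(Measure.pi P) = √(v 0 : ℝ) * √(2/π) := by
    rw [integral_eval P 0 (fun y => |y|) continuous_abs.aestronglyMeasurable]
    exact integral_abs_gaussianReal (hvne 0)
  simp_rw [hsq]
  rw [habs]
  have hmeas : (Measure.pi P) Set.univ = 1 := measure_univ
  rw [measureReal_def, hmeas]
  have hc2 : c^2 = 2 * (v 0 : ℝ) / π := by
    rw [hc_def, mul_pow, Real.sq_sqrt (by positivity), Real.sq_sqrt (by positivity)]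
    have hv0 : (0:ℝ) < (v 0 : ℝ) := by exact_mod_cast hpos 0
    field_simp
  have hcc : c * (√(v 0 : ℝ) * √(2/π)) = c^2 := by rw [hc_def]; ring
  rw [ENNReal.toReal_one, smul_eq_mul, one_mul]
  rw [show 2 * c * (√(v 0 : ℝ) * √(2/π)) = 2 * (c * (√(v 0 : ℝ) * √(2/π))) by ring, hcc, hc2]
  ring
end
end

section
/- Let a > 0 and σ > 0, and let Y be a real random variable with the two-component Gaussian mixture distribution (1/2) N(−a/2, σ^2) + (1/2) N(a/2, σ^2), and let Z ~ N(0,1). Then E[Y | Y > 0] = √(2/π) σ e^{−a^2/(8σ^2)} + (a/2) P(|Z| < a/(2σ)). -/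
open MeasureTheory ProbabilityTheory Real
open scoped ENNReal NNReal
open Filter Set

noncomputable section

-- Lemma 1: set integral wrt gaussian as weighted volume integral
lemma setIntegral_gaussianReal (c : ℝ) {v : ℝ≥0} (hv : v ≠ 0) (f : ℝ → ℝ) {s : Set ℝ}
    (hs : MeasurableSet s) :
    ∫ x in s, f x ∂(gaussianReal c v) = ∫ x in s, gaussianPDFReal c v x * f x := by
  rw [gaussianReal_of_var_ne_zero _ hv, gaussianPDF_def, restrict_withDensity hs]
  have h : (fun x => ENNReal.ofReal (gaussianPDFReal c v x))
      = fun x => ((fun y => (gaussianPDFReal c v y).toNNReal) x : ℝ≥0∞) := rfl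
  rw [h, integral_withDensity_eq_integral_smul
    ((measurable_gaussianPDFReal c v).real_toNNReal) f]
  refine integral_congr_ae (ae_of_all _ fun x => ?_)
  simp [NNReal.smul_def, Real.coe_toNNReal _ (gaussianPDFReal_nonneg c v x)]

-- Lemma 2: integrability of x * pdf
lemma integrable_gaussianPDFReal_mul_id (c : ℝ) {v : ℝ≥0} (hv : v ≠ 0) :
    Integrable (fun x => gaussianPDFReal c v x * x) := by
  have hv' : (0:ℝ) < v := lt_of_le_of_ne v.coe_nonneg (by exact_mod_cast hv.symm)
  have hb : (0:ℝ) < (2*(v:ℝ))⁻¹ := by positivity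
  have h := (((integrable_mul_exp_neg_mul_sq hb).comp_sub_right c).add
      (((integrable_exp_neg_mul_sq hb).comp_sub_right c).const_mul c)).const_mul
      (Real.sqrt (2*π*v))⁻¹
  refine h.congr (ae_of_all _ fun x => ?_)
  have harg : -(2*(v:ℝ))⁻¹ * (x - c)^2 = -(x - c)^2/(2*v) := by ring
  simp only [gaussianPDFReal, Pi.add_apply]
  rw [harg]
  ring

-- integrable id wrt gaussian
lemma integrable_id_gaussianReal (c : ℝ) {v : ℝ≥0} (hv : v ≠ 0) :
    Integrable id (gaussianReal c v) := by
  rw [gaussianReal_of_var_ne_zero _ hv, gaussianPDF_def]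
  have h : (fun x => ENNReal.ofReal (gaussianPDFReal c v x))
      = fun x => ((fun y => (gaussianPDFReal c v y).toNNReal) x : ℝ≥0∞) := rfl
  rw [h, integrable_withDensity_iff_integrable_smul
    ((measurable_gaussianPDFReal c v).real_toNNReal)]
  refine (integrable_gaussianPDFReal_mul_id c hv).congr (ae_of_all _ fun x => ?_)
  simp [NNReal.smul_def, Real.coe_toNNReal _ (gaussianPDFReal_nonneg c v x)]

-- derivative of the pdf antiderivative
lemma hasDerivAt_neg_v_pdf (c : ℝ) {v : ℝ≥0} (hv : v ≠ 0) (x : ℝ) :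
    HasDerivAt (fun y => -(v:ℝ) * gaussianPDFReal c v y)
      ((x - c) * gaussianPDFReal c v x) x := by
  have hv' : (0:ℝ) < v := lt_of_le_of_ne v.coe_nonneg (by exact_mod_cast hv.symm)
  have hu : HasDerivAt (fun y : ℝ => -(y - c)^2/(2*(v:ℝ)))
      (-(2*(x - c))/(2*(v:ℝ))) x := by
    have h1 : HasDerivAt (fun y : ℝ => (y - c)^2) (2*(x - c)) x := by
      have := ((hasDerivAt_id x).sub_const c).pow 2
      exact this.congr_deriv (by simp)
    simpa using (h1.neg.div_const (2*(v:ℝ)))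
  have h2 := ((hu.exp).const_mul ((Real.sqrt (2*π*v))⁻¹)).const_mul (-(v:ℝ))
  have heq : (fun y => -(v:ℝ) * gaussianPDFReal c v y)
      = fun y => -(v:ℝ) * ((Real.sqrt (2*π*v))⁻¹ * Real.exp (-(y - c)^2/(2*(v:ℝ)))) := by
    funext y; rw [gaussianPDFReal]
  rw [heq]
  refine h2.congr_deriv ?_
  rw [gaussianPDFReal]
  field_simp

lemma integral_Ioi_sub_mul_pdf (c : ℝ) {v : ℝ≥0} (hv : v ≠ 0) :
    ∫ x in Ioi (0:ℝ), (x - c) * gaussianPDFReal c v x = (v:ℝ) * gaussianPDFReal c v 0 := by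
  have hv' : (0:ℝ) < v := lt_of_le_of_ne v.coe_nonneg (by exact_mod_cast hv.symm)
  have hint : Integrable (fun x => (x - c) * gaussianPDFReal c v x) := by
    refine ((integrable_gaussianPDFReal_mul_id c hv).sub
      ((integrable_gaussianPDFReal c v).const_mul c)).congr (ae_of_all _ fun x => ?_)
    simp only [Pi.sub_apply]
    ring
  have htend : Tendsto (fun y => -(v:ℝ) * gaussianPDFReal c v y) atTop (nhds 0) := by
    have h1 : Tendsto (fun y : ℝ => -(y - c)^2/(2*(v:ℝ))) atTop atBot := by
      apply Tendsto.atBot_div_const (by positivity)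
      apply tendsto_neg_atBot_iff.mpr
      exact (tendsto_pow_atTop (two_ne_zero)).comp (tendsto_atTop_add_const_right _ (-c) tendsto_id) |>.congr (fun y => by simp [Function.comp, sub_eq_add_neg])
    have h2 : Tendsto (fun y => gaussianPDFReal c v y) atTop (nhds 0) := by
      have := (Real.tendsto_exp_atBot.comp h1).const_mul ((Real.sqrt (2*π*v))⁻¹)
      simpa [gaussianPDFReal_def, Function.comp] using this
    have := h2.const_mul (-(v:ℝ))
    simpa using this
  have := integral_Ioi_of_hasDerivAt_of_tendsto' (a := 0) (f := fun y => -(v:ℝ) * gaussianPDFReal c v y)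
    (fun x _ => hasDerivAt_neg_v_pdf c hv x) hint.integrableOn htend
  rw [this]
  simp

lemma integral_Ioi_pdf_mul_id (c : ℝ) {v : ℝ≥0} (hv : v ≠ 0) :
    ∫ x in Ioi (0:ℝ), gaussianPDFReal c v x * x
      = (v:ℝ) * gaussianPDFReal c v 0 + c * ((gaussianReal c v) (Ioi 0)).toReal := by
  have hmeas : ((gaussianReal c v) (Ioi 0)).toReal = ∫ x in Ioi (0:ℝ), gaussianPDFReal c v x := by
    rw [gaussianReal_apply_eq_integral _ hv, ENNReal.toReal_ofReal]
    exact setIntegral_nonneg measurableSet_Ioi (fun x _ => gaussianPDFReal_nonneg c v x)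
  have h1 : IntegrableOn (fun x => (x - c) * gaussianPDFReal c v x) (Ioi 0) := by
    refine (((integrable_gaussianPDFReal_mul_id c hv).sub
      ((integrable_gaussianPDFReal c v).const_mul c)).congr (ae_of_all _ fun x => ?_)).integrableOn
    simp only [Pi.sub_apply]; ring
  have h2 : IntegrableOn (fun x => c * gaussianPDFReal c v x) (Ioi 0) :=
    ((integrable_gaussianPDFReal c v).const_mul c).integrableOn
  have hsplit : ∀ x : ℝ, gaussianPDFReal c v x * x
      = (x - c) * gaussianPDFReal c v x + c * gaussianPDFReal c v x := fun x => by ring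
  rw [hmeas]
  calc ∫ x in Ioi (0:ℝ), gaussianPDFReal c v x * x
      = ∫ x in Ioi (0:ℝ), ((x - c) * gaussianPDFReal c v x + c * gaussianPDFReal c v x) := by
        exact integral_congr_ae (ae_of_all _ fun x => hsplit x)
    _ = (∫ x in Ioi (0:ℝ), (x - c) * gaussianPDFReal c v x)
        + ∫ x in Ioi (0:ℝ), c * gaussianPDFReal c v x := integral_add h1 h2
    _ = (v:ℝ) * gaussianPDFReal c v 0 + c * ∫ x in Ioi (0:ℝ), gaussianPDFReal c v x := by
        rw [integral_Ioi_sub_mul_pdf c hv, integral_const_mul]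

lemma sq_toNNReal_eq (σ : ℝ) : ((σ^2).toNNReal) = (⟨σ^2, sq_nonneg σ⟩ : ℝ≥0) := by
  ext; simp [Real.coe_toNNReal _ (sq_nonneg σ)]; rfl

lemma gaussianReal_eq_map (σ c : ℝ) (hσ : 0 < σ) :
    gaussianReal c ((σ^2).toNNReal) = (gaussianReal 0 1).map (fun x => σ * x + c) := by
  have h1 : (gaussianReal (0:ℝ) 1).map (σ * ·) = gaussianReal 0 ((σ^2).toNNReal) := by
    rw [gaussianReal_map_const_mul σ, mul_zero, mul_one, sq_toNNReal_eq]
    rfl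
  have hcomp : (fun x : ℝ => σ * x + c) = ((· + c) ∘ (σ * ·)) := rfl
  rw [hcomp, ← Measure.map_map (measurable_add_const c) (measurable_const_mul σ), h1,
    gaussianReal_map_add_const, zero_add]

lemma gaussianReal_Ioi_eq (σ c : ℝ) (hσ : 0 < σ) :
    gaussianReal c ((σ^2).toNNReal) {y | 0 < y} = gaussianReal 0 1 (Ioi (-(c/σ))) := by
  rw [gaussianReal_eq_map σ c hσ,
    Measure.map_apply (by fun_prop) (by exact measurableSet_Ioi : MeasurableSet {y:ℝ | 0 < y})]
  congr 1
  ext x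
  simp only [mem_preimage, mem_setOf_eq, mem_Ioi]
  rw [show -(c/σ) = (-c)/σ by ring, div_lt_iff₀ hσ]
  constructor <;> intro h <;> nlinarith

lemma stdGaussian_singleton (x : ℝ) : gaussianReal 0 1 {x} = 0 :=
  gaussianReal_absolutelyContinuous 0 one_ne_zero (measure_singleton x)

instance : NullSingletonClass (gaussianReal 0 1) := ⟨stdGaussian_singleton⟩

lemma stdGaussian_Ici (x : ℝ) : gaussianReal 0 1 (Ici x) = gaussianReal 0 1 (Ioi x) :=
  (measure_congr (Ioi_ae_eq_Ici (μ := gaussianReal 0 1) (a := x))).symm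

lemma stdGaussian_symm (x : ℝ) : gaussianReal 0 1 (Iio (-x)) = gaussianReal 0 1 (Ioi x) := by
  have hmap : (gaussianReal (0:ℝ) 1).map ((-1 : ℝ) * ·) = gaussianReal 0 1 := by
    rw [gaussianReal_map_const_mul (-1 : ℝ)]
    congr 1
    · norm_num
    · ext; norm_num
  conv_rhs => rw [← hmap]
  rw [Measure.map_apply (by fun_prop) measurableSet_Ioi]
  congr 1
  ext y
  simp only [mem_preimage, mem_Ioi, mem_Iio]
  constructor <;> intro h <;> linarith

lemma stdGaussian_sum (t : ℝ) :
    gaussianReal 0 1 (Ioi t) + gaussianReal 0 1 (Ioi (-t)) = 1 := by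
  have hd : Disjoint (Iio (-t)) (Ioi (-t)) :=
    Set.disjoint_left.mpr fun y h1 h2 => absurd (lt_trans (show -t < y from h2) (show y < -t from h1)) (lt_irrefl _)
  rw [← stdGaussian_symm t, ← measure_union hd measurableSet_Ioi,
    Iio_union_Ioi, measure_compl (measurableSet_singleton _) (measure_ne_top _ _),
    stdGaussian_singleton, measure_univ, tsub_zero]

lemma stdGaussian_split (t : ℝ) (ht : 0 < t) :
    gaussianReal 0 1 (Ioi (-t)) = gaussianReal 0 1 (Ioo (-t) t) + gaussianReal 0 1 (Ioi t) := by
  have hd : Disjoint (Ioo (-t) t) (Ici t) :=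
    Set.disjoint_left.mpr fun y h1 h2 => absurd h1.2 (not_lt.mpr h2)
  rw [← stdGaussian_Ici t, ← measure_union hd measurableSet_Ici,
    Ioo_union_Ici_eq_Ioi (by linarith)]

lemma pdf_at_zero (c σ : ℝ) (hσ : 0 < σ) :
    (((σ^2).toNNReal : ℝ≥0) : ℝ) * gaussianPDFReal c ((σ^2).toNNReal) 0
      = σ / Real.sqrt (2*π) * Real.exp (-(c^2) / (2*σ^2)) := by
  have hcoe : (((σ^2).toNNReal : ℝ≥0) : ℝ) = σ^2 := Real.coe_toNNReal _ (sq_nonneg σ)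
  rw [gaussianPDFReal, hcoe, Real.sqrt_mul (by positivity : (0:ℝ) ≤ 2*π) (σ^2),
    Real.sqrt_sq hσ.le, show ((0:ℝ)-c)^2 = c^2 by ring]
  have h2π : Real.sqrt (2*π) ≠ 0 := by positivity
  field_simp

lemma sqrt_two_div_pi : Real.sqrt (2/π) = 2 / Real.sqrt (2*π) := by
  have h : Real.sqrt (2*π) > 0 := by positivity
  rw [eq_div_iff h.ne', ← Real.sqrt_mul (by positivity : (0:ℝ) ≤ 2/π) (2*π),
    show 2/π*(2*π) = 4 by field_simp; ring, show (4:ℝ) = 2^2 by norm_num,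
    Real.sqrt_sq (by norm_num : (0:ℝ) ≤ 2)]

/-- For `Y ~ (1/2)N(-a/2, σ²) + (1/2)N(a/2, σ²)` with `a > 0`, `σ > 0`,
and `Z ~ N(0,1)`:
`E[Y | Y > 0] = √(2/π) σ e^{-a²/(8σ²)} + (a/2) P(|Z| < a/(2σ))`. -/
theorem mixture_conditional_mean (a σ : ℝ) (ha : 0 < a) (hσ : 0 < σ) :
    condMean ((2⁻¹ : ℝ≥0∞) • gaussianReal (-(a/2)) ((σ^2).toNNReal)
        + (2⁻¹ : ℝ≥0∞) • gaussianReal (a/2) ((σ^2).toNNReal))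
      {y | 0 < y} id
      = Real.sqrt (2/π) * σ * Real.exp (-(a^2) / (8 * σ^2))
        + a/2 * (gaussianReal 0 1 {z | |z| < a/(2*σ)}).toReal := by
  set v : ℝ≥0 := (σ^2).toNNReal with hv_def
  have hv : v ≠ 0 := by
    simp only [hv_def, ne_eq, Real.toNNReal_eq_zero, not_le]
    positivity
  set t : ℝ := a/(2*σ) with ht_def
  have ht : 0 < t := by positivity
  have hA : {y : ℝ | 0 < y} = Ioi (0:ℝ) := rfl
  set G : Measure ℝ := gaussianReal 0 1 with hG_def
  -- probabilities
  have hpP : gaussianReal (a/2) v {y | 0 < y} = G (Ioi (-t)) := by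
    rw [gaussianReal_Ioi_eq σ (a/2) hσ]
    congr 2
    rw [div_div]
  have hpM : gaussianReal (-(a/2)) v {y | 0 < y} = G (Ioi t) := by
    rw [gaussianReal_Ioi_eq σ (-(a/2)) hσ]
    congr 2
    rw [neg_div, neg_neg, div_div]
  -- denominator
  have hdenom : ((2⁻¹ : ℝ≥0∞) • gaussianReal (-(a/2)) v
      + (2⁻¹ : ℝ≥0∞) • gaussianReal (a/2) v) {y | 0 < y} = 2⁻¹ := by
    rw [Measure.add_apply, Measure.smul_apply, Measure.smul_apply, smul_eq_mul, smul_eq_mul,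
      hpP, hpM, ← mul_add, stdGaussian_sum t, mul_one]
  -- split of the Ioo probability
  have hsplit : (G (Ioi (-t))).toReal
      = (G (Ioo (-t) t)).toReal + (G (Ioi t)).toReal := by
    rw [stdGaussian_split t ht, ENNReal.toReal_add (measure_ne_top _ _) (measure_ne_top _ _)]
  -- numerator pieces
  have hIc : ∀ c : ℝ, ∫ x in {y : ℝ | 0 < y}, id x ∂(gaussianReal c v)
      = (v:ℝ) * gaussianPDFReal c v 0 + c * ((gaussianReal c v) {y | 0 < y}).toReal := by
    intro c
    rw [hA, setIntegral_gaussianReal c hv id measurableSet_Ioi]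
    simp only [id_eq]
    rw [integral_Ioi_pdf_mul_id c hv]
  -- numerator
  have hnum : ∫ x in {y : ℝ | 0 < y}, id x ∂((2⁻¹ : ℝ≥0∞) • gaussianReal (-(a/2)) v
      + (2⁻¹ : ℝ≥0∞) • gaussianReal (a/2) v)
      = 2⁻¹ * (((v:ℝ) * gaussianPDFReal (-(a/2)) v 0 + (-(a/2)) * (G (Ioi t)).toReal)
        + ((v:ℝ) * gaussianPDFReal (a/2) v 0 + (a/2) * (G (Ioi (-t))).toReal)) := by
    rw [Measure.restrict_add, Measure.restrict_smul, Measure.restrict_smul,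
      integral_add_measure
        (((integrable_id_gaussianReal (-(a/2)) hv).restrict).smul_measure (by simp))
        (((integrable_id_gaussianReal (a/2) hv).restrict).smul_measure (by simp)),
      integral_smul_measure, integral_smul_measure]
    rw [show (∫ x, id x ∂((gaussianReal (-(a/2)) v).restrict {y | 0 < y}))
        = ∫ x in {y : ℝ | 0 < y}, id x ∂(gaussianReal (-(a/2)) v) from rfl,
      show (∫ x, id x ∂((gaussianReal (a/2) v).restrict {y | 0 < y}))
        = ∫ x in {y : ℝ | 0 < y}, id x ∂(gaussianReal (a/2) v) from rfl,
      hIc, hIc, hpP, hpM]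
    simp only [ENNReal.toReal_inv, ENNReal.toReal_ofNat, smul_eq_mul]
    ring
  -- pdf values
  have hpdfP : (v:ℝ) * gaussianPDFReal (a/2) v 0
      = σ / Real.sqrt (2*π) * Real.exp (-(a^2) / (8*σ^2)) := by
    rw [hv_def, pdf_at_zero (a/2) σ hσ, show -((a/2)^2) / (2*σ^2) = -(a^2)/(8*σ^2) by ring]
  have hpdfM : (v:ℝ) * gaussianPDFReal (-(a/2)) v 0
      = σ / Real.sqrt (2*π) * Real.exp (-(a^2) / (8*σ^2)) := by
    rw [hv_def, pdf_at_zero (-(a/2)) σ hσ, show -((-(a/2))^2) / (2*σ^2) = -(a^2)/(8*σ^2) by ring]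
  -- the abs set
  have hset : {z : ℝ | |z| < a/(2*σ)} = Ioo (-t) t := by
    ext z
    simp only [mem_setOf_eq, mem_Ioo, abs_lt, ht_def]
  -- conclude
  rw [condMean, hnum, hdenom, hset]
  rw [hsplit, hpdfP, hpdfM, sqrt_two_div_pi]
  have h2π : (0:ℝ) < Real.sqrt (2*π) := by positivity
  simp only [ENNReal.toReal_inv, ENNReal.toReal_ofNat]
  field_simp
  ring
end
end

section
/- Let a ≥ 0 and σ_1 > 0, set u = a/(2σ_1) and κ = (a/2) P(|Z| ≤ u) + √(2/π) σ_1 e^{−u^2/2} where Z ~ N(0,1). Then κ^2 − (2/π)(σ_1^2 + a^2/4) ≥ a^4/(240 σ_1^2 π) whenever 0 ≤ a ≤ 4σ_1, and κ^2 − (2/π)(σ_1^2 + a^2/4) ≥ a^2/40 whenever a ≥ 4σ_1. -/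
open MeasureTheory ProbabilityTheory Real
open scoped ENNReal NNReal

noncomputable section

lemma Q_nonneg (x : ℝ) (h0 : 0 ≤ x) (h4 : x ≤ 4) :
    0 ≤ 1 + x/2 - x^2/24 + x^3/240 - x^4/2688 + x^5/34560 - x^6/42240 := by
  nlinarith [sq_nonneg x, sq_nonneg (x-2), sq_nonneg (x-4), mul_nonneg h0 h0,
    mul_nonneg (mul_nonneg h0 h0) h0, sq_nonneg (x*(4-x)), sq_nonneg (x^2-4), sq_nonneg (x^3),
    mul_nonneg (sub_nonneg.2 h4) h0]

lemma Q_sq (x : ℝ) (h0 : 0 ≤ x) (h4 : x ≤ 4) :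
    1 + x + x^2/30 ≤ (1 + x/2 - x^2/24 + x^3/240 - x^4/2688 + x^5/34560 - x^6/42240)^2 := by
  have hS : 0 ≤ 2/15 - x/30 + 13*x^2/2520 - x^3/1512 + 797*x^4/26611200 - 233*x^5/7983360
      + 42067*x^6/17882726400 - 559*x^7/2554675200 + 1697*x^8/91968307200
      - x^9/729907200 + x^10/1784217600 := by
    nlinarith [sq_nonneg x, sq_nonneg (x-1), sq_nonneg (x-2), sq_nonneg (x-4), mul_nonneg h0 h0,
      sq_nonneg (x*(4-x)), mul_nonneg (mul_nonneg h0 h0) h0, pow_le_pow_left₀ h0 h4 5,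
      sq_nonneg (x^2-4), sq_nonneg (x^3), mul_nonneg (sub_nonneg.2 h4) h0]
  nlinarith [mul_nonneg (sq_nonneg x) hS]

lemma drop_terms (u : ℝ) (hu0 : 0 ≤ u) (hu2 : u ≤ 2) :
    1 + u^2/2 - (u^2)^2/24 + (u^2)^3/240 - (u^2)^4/2688 + (u^2)^5/34560 - (u^2)^6/42240
      ≤ u*(u - u^3/6 + u^5/40 - u^7/336 + u^9/3456 - u^11/42240 + u^13/599040 - u^15/9676800)
        + (1 - u^2/2 + u^4/8 - u^6/48 + u^8/384 - u^10/3840 + u^12/46080 - u^14/645120) := by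
  have h12 : (0:ℝ) ≤ u^12 := by positivity
  have h14 : (0:ℝ) ≤ u^14 := by positivity
  have h4 : u^4 ≤ 16 := by
    have := pow_le_pow_left₀ hu0 hu2 4
    norm_num at this; linarith
  have h16 : u^16 ≤ 16 * u^12 := by
    calc u^16 = u^12 * u^4 := by ring
      _ ≤ u^12 * 16 := mul_le_mul_of_nonneg_left h4 h12
      _ = 16 * u^12 := by ring
  have hid : u*(u - u^3/6 + u^5/40 - u^7/336 + u^9/3456 - u^11/42240 + u^13/599040 - u^15/9676800)
        + (1 - u^2/2 + u^4/8 - u^6/48 + u^8/384 - u^10/3840 + u^12/46080 - u^14/645120)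
        - (1 + u^2/2 - (u^2)^2/24 + (u^2)^3/240 - (u^2)^4/2688 + (u^2)^5/34560 - (u^2)^6/42240)
      = u^12/46080 + u^14 * (1/599040 - 1/645120) - u^16/9676800 := by ring
  linarith [hid, h12, h14, h16]

lemma exp_neg_taylor_lb (x : ℝ) (hx : 0 ≤ x) :
    1 - x + x^2/2 - x^3/6 + x^4/24 - x^5/120 + x^6/720 - x^7/5040 ≤ Real.exp (-x) := by
  have hderiv : ∀ y : ℝ, HasDerivAt
      (fun z : ℝ => (1 - z + z^2/2 - z^3/6 + z^4/24 - z^5/120 + z^6/720 - z^7/5040) * Real.exp z)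
      (-(y^7/5040) * Real.exp y) y := by
    intro y
    have h1 : HasDerivAt
        (fun z : ℝ => 1 - z + z^2/2 - z^3/6 + z^4/24 - z^5/120 + z^6/720 - z^7/5040)
        (-1 + y - y^2/2 + y^3/6 - y^4/24 + y^5/120 - y^6/720) y := by
      have h2 := ((((((((hasDerivAt_const y (1:ℝ)).sub (hasDerivAt_id' (x := y))).add
          ((hasDerivAt_pow 2 y).div_const 2)).sub ((hasDerivAt_pow 3 y).div_const 6)).add
          ((hasDerivAt_pow 4 y).div_const 24)).sub ((hasDerivAt_pow 5 y).div_const 120)).add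
          ((hasDerivAt_pow 6 y).div_const 720)).sub ((hasDerivAt_pow 7 y).div_const 5040))
      refine h2.congr_deriv ?_; push_cast; ring
    have h3 := h1.mul (Real.hasDerivAt_exp y)
    refine h3.congr_deriv ?_
    ring
  have key : (1 - x + x^2/2 - x^3/6 + x^4/24 - x^5/120 + x^6/720 - x^7/5040) * Real.exp x ≤ 1 := by
    have anti : AntitoneOn
        (fun z : ℝ => (1 - z + z^2/2 - z^3/6 + z^4/24 - z^5/120 + z^6/720 - z^7/5040) * Real.exp z)
        (Set.Ici (0:ℝ)) := by
      apply antitoneOn_of_deriv_nonpos (convex_Ici 0)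
      · exact Continuous.continuousOn (by continuity)
      · intro y _; exact (hderiv y).differentiableAt.differentiableWithinAt
      · intro y hy
        rw [(hderiv y).deriv]
        have hy0 : (0:ℝ) ≤ y := le_of_lt (by simpa [interior_Ici] using hy)
        have h7 : 0 ≤ y^7/5040 := by positivity
        nlinarith [Real.exp_pos y]
    have h0 := anti (Set.self_mem_Ici) (Set.mem_Ici.2 hx) hx
    simpa using h0
  have hexp : (0:ℝ) < Real.exp x := Real.exp_pos x
  have hmul : Real.exp (-x) * Real.exp x = 1 := by
    rw [← Real.exp_add]; simp
  have := key.trans_eq hmul.symm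
  exact le_of_mul_le_mul_right this hexp

lemma exp_neg_taylor_lb' (z : ℝ) :
    1 - z^2/2 + z^4/8 - z^6/48 + z^8/384 - z^10/3840 + z^12/46080 - z^14/645120
      ≤ Real.exp (-(z^2/2)) := by
  have h := exp_neg_taylor_lb (z^2/2) (by positivity)
  calc 1 - z^2/2 + z^4/8 - z^6/48 + z^8/384 - z^10/3840 + z^12/46080 - z^14/645120
      = 1 - (z^2/2) + (z^2/2)^2/2 - (z^2/2)^3/6 + (z^2/2)^4/24 - (z^2/2)^5/120
        + (z^2/2)^6/720 - (z^2/2)^7/5040 := by ring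
    _ ≤ Real.exp (-(z^2/2)) := h

lemma poly_antideriv (y : ℝ) : HasDerivAt
    (fun z : ℝ => z - z^3/6 + z^5/40 - z^7/336 + z^9/3456 - z^11/42240 + z^13/599040 - z^15/9676800)
    (1 - y^2/2 + y^4/8 - y^6/48 + y^8/384 - y^10/3840 + y^12/46080 - y^14/645120) y := by
  have h2 := (((((((hasDerivAt_id' (x := y)).sub ((hasDerivAt_pow 3 y).div_const 6)).add
      ((hasDerivAt_pow 5 y).div_const 40)).sub ((hasDerivAt_pow 7 y).div_const 336)).add
      ((hasDerivAt_pow 9 y).div_const 3456)).sub ((hasDerivAt_pow 11 y).div_const 42240)).add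
      ((hasDerivAt_pow 13 y).div_const 599040)).sub ((hasDerivAt_pow 15 y).div_const 9676800)
  refine h2.congr_deriv ?_
  push_cast; ring

lemma poly_integral (u : ℝ) :
    ∫ z in (-u)..u, (1 - z^2/2 + z^4/8 - z^6/48 + z^8/384 - z^10/3840 + z^12/46080 - z^14/645120)
      = 2*(u - u^3/6 + u^5/40 - u^7/336 + u^9/3456 - u^11/42240 + u^13/599040 - u^15/9676800) := by
  rw [intervalIntegral.integral_eq_sub_of_hasDerivAt (fun y _ => poly_antideriv y)
    (Continuous.intervalIntegrable (by continuity) _ _)]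
  ring

lemma gauss_lb (u : ℝ) (hu : 0 ≤ u) :
    (Real.sqrt (2*π))⁻¹ * (2*(u - u^3/6 + u^5/40 - u^7/336 + u^9/3456 - u^11/42240 + u^13/599040 - u^15/9676800))
      ≤ (gaussianReal 0 1 {z | |z| ≤ u}).toReal := by
  have hset : {z : ℝ | |z| ≤ u} = Set.Icc (-u) u := by ext z; simp [abs_le]
  have hpdf : ∀ x : ℝ, gaussianPDFReal 0 1 x = (Real.sqrt (2*π))⁻¹ * Real.exp (-(x^2/2)) := by
    intro x; rw [gaussianPDFReal]; norm_num [neg_div]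
  have hC : (0:ℝ) ≤ (Real.sqrt (2*π))⁻¹ := by positivity
  have hmeas : (gaussianReal 0 1 {z | |z| ≤ u}).toReal
      = (Real.sqrt (2*π))⁻¹ * ∫ z in (-u)..u, Real.exp (-(z^2/2)) := by
    rw [gaussianReal_apply_eq_integral 0 (by norm_num) _]
    rw [ENNReal.toReal_ofReal (by
      apply setIntegral_nonneg
      · rw [hset]; exact measurableSet_Icc
      · exact fun x _ => gaussianPDFReal_nonneg 0 1 x)]
    rw [hset, MeasureTheory.integral_Icc_eq_integral_Ioc,
      ← intervalIntegral.integral_of_le (by linarith : -u ≤ u)]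
    simp_rw [hpdf]
    rw [intervalIntegral.integral_const_mul]
  rw [hmeas]
  apply mul_le_mul_of_nonneg_left _ hC
  rw [← poly_integral u]
  apply intervalIntegral.integral_mono_on (by linarith : -u ≤ u)
    (Continuous.intervalIntegrable (by continuity) _ _)
    (Continuous.intervalIntegrable (by fun_prop) _ _)
  intro x _
  exact exp_neg_taylor_lb' x

set_option maxHeartbeats 1000000 in
/-- With `u = a/(2σ₁)` and
`κ = (a/2)P(|Z| ≤ u) + √(2/π) σ₁ e^{-u²/2}` for `Z ~ N(0,1)`:
`κ² - (2/π)(σ₁² + a²/4) ≥ a⁴/(240σ₁²π)` for `0 ≤ a ≤ 4σ₁`, and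
`κ² - (2/π)(σ₁² + a²/4) ≥ a²/40` for `a ≥ 4σ₁`. -/
theorem kappa_lower_bound (a σ1 : ℝ) (ha : 0 ≤ a) (hσ : 0 < σ1) :
    let u : ℝ := a / (2 * σ1)
    let κ : ℝ := a/2 * (gaussianReal 0 1 {z | |z| ≤ u}).toReal
      + Real.sqrt (2/π) * σ1 * Real.exp (-(u^2) / 2)
    (a ≤ 4 * σ1 → a^4 / (240 * σ1^2 * π) ≤ κ^2 - 2/π * (σ1^2 + a^2/4)) ∧
    (4 * σ1 ≤ a → a^2 / 40 ≤ κ^2 - 2/π * (σ1^2 + a^2/4)) := by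
  intro u κ
  have hu_def : u = a / (2 * σ1) := rfl
  have hκ_def : κ = a/2 * (gaussianReal 0 1 {z | |z| ≤ u}).toReal
      + Real.sqrt (2/π) * σ1 * Real.exp (-(u^2) / 2) := rfl
  clear_value u κ
  have hπ : (0:ℝ) < π := Real.pi_pos
  have hσ' : σ1 ≠ 0 := ne_of_gt hσ
  have hu0 : 0 ≤ u := by rw [hu_def]; positivity
  have ha_eq : a = 2 * σ1 * u := by rw [hu_def]; field_simp
  set C : ℝ := (Real.sqrt (2*π))⁻¹ with hC_def
  have hC : (0:ℝ) < C := by positivity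
  have hC2 : C^2 = (2*π)⁻¹ := by
    rw [hC_def, ← Real.sqrt_inv, Real.sq_sqrt (by positivity)]
  have hsqrt : Real.sqrt (2/π) = 2 * C := by
    rw [show (2:ℝ)/π = 4 * (2*π)⁻¹ by field_simp; ring, Real.sqrt_mul (by norm_num),
      Real.sqrt_inv, show Real.sqrt 4 = 2 by
        rw [show (4:ℝ) = 2^2 by norm_num, Real.sqrt_sq (by norm_num)], hC_def]
  have hexp_eq : Real.exp (-(u^2) / 2) = Real.exp (-(u^2/2)) := by rw [neg_div]
  have hE : 1 - u^2/2 + u^4/8 - u^6/48 + u^8/384 - u^10/3840 + u^12/46080 - u^14/645120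
      ≤ Real.exp (-(u^2) / 2) := by rw [hexp_eq]; exact exp_neg_taylor_lb' u
  constructor
  · -- case a ≤ 4 σ1
    intro hcase
    have hu2 : u ≤ 2 := by
      rw [hu_def, div_le_iff₀ (by positivity)]; linarith
    have hP := gauss_lb u hu0
    rw [← hC_def] at hP
    have hκ_lb : 2*C*σ1 * (u*(u - u^3/6 + u^5/40 - u^7/336 + u^9/3456 - u^11/42240 + u^13/599040 - u^15/9676800)
        + (1 - u^2/2 + u^4/8 - u^6/48 + u^8/384 - u^10/3840 + u^12/46080 - u^14/645120)) ≤ κ := by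
      rw [hκ_def, ha_eq, hsqrt]
      have h1 : (2*σ1*u)/2 * (C * (2*(u - u^3/6 + u^5/40 - u^7/336 + u^9/3456 - u^11/42240 + u^13/599040 - u^15/9676800)))
          ≤ (2*σ1*u)/2 * (gaussianReal 0 1 {z | |z| ≤ u}).toReal :=
        mul_le_mul_of_nonneg_left hP (by positivity)
      have h2 : 2*C*σ1 * (1 - u^2/2 + u^4/8 - u^6/48 + u^8/384 - u^10/3840 + u^12/46080 - u^14/645120)
          ≤ 2*C*σ1 * Real.exp (-(u^2) / 2) := mul_le_mul_of_nonneg_left hE (by positivity)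
      nlinarith [h1, h2]
    have hx0 : (0:ℝ) ≤ u^2 := sq_nonneg u
    have hx4 : u^2 ≤ 4 := by nlinarith
    have hQ0 := Q_nonneg (u^2) hx0 hx4
    have hQsq := Q_sq (u^2) hx0 hx4
    have hdrop := drop_terms u hu0 hu2
    have hLκ : 2*C*σ1 * (1 + u^2/2 - (u^2)^2/24 + (u^2)^3/240 - (u^2)^4/2688 + (u^2)^5/34560 - (u^2)^6/42240) ≤ κ :=
      le_trans (mul_le_mul_of_nonneg_left hdrop (by positivity)) hκ_lb
    have hL0 : 0 ≤ 2*C*σ1 * (1 + u^2/2 - (u^2)^2/24 + (u^2)^3/240 - (u^2)^4/2688 + (u^2)^5/34560 - (u^2)^6/42240) :=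
      mul_nonneg (by positivity) hQ0
    have hκsq := pow_le_pow_left₀ hL0 hLκ 2
    have hL2 : (2*C*σ1 * (1 + u^2/2 - (u^2)^2/24 + (u^2)^3/240 - (u^2)^4/2688 + (u^2)^5/34560 - (u^2)^6/42240))^2
        = 4 * (2*π)⁻¹ * σ1^2 * (1 + u^2/2 - (u^2)^2/24 + (u^2)^3/240 - (u^2)^4/2688 + (u^2)^5/34560 - (u^2)^6/42240)^2 := by
      rw [show (2*C*σ1 * (1 + u^2/2 - (u^2)^2/24 + (u^2)^3/240 - (u^2)^4/2688 + (u^2)^5/34560 - (u^2)^6/42240))^2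
        = 4 * C^2 * σ1^2 * (1 + u^2/2 - (u^2)^2/24 + (u^2)^3/240 - (u^2)^4/2688 + (u^2)^5/34560 - (u^2)^6/42240)^2 by ring, hC2]
    rw [hL2] at hκsq
    have e1 : 2/π * (σ1^2 + a^2/4) + a^4 / (240 * σ1^2 * π)
        = 4 * (2*π)⁻¹ * σ1^2 * (1 + u^2 + (u^2)^2/30) := by
      rw [ha_eq]; field_simp; ring
    have hmono : 4 * (2*π)⁻¹ * σ1^2 * (1 + u^2 + (u^2)^2/30)
        ≤ 4 * (2*π)⁻¹ * σ1^2 * (1 + u^2/2 - (u^2)^2/24 + (u^2)^3/240 - (u^2)^4/2688 + (u^2)^5/34560 - (u^2)^6/42240)^2 :=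
      mul_le_mul_of_nonneg_left hQsq (by positivity)
    linarith [hκsq, hmono, e1.ge, e1.le]
  · -- case 4 σ1 ≤ a
    intro hcase
    have hu2 : (2:ℝ) ≤ u := by
      rw [hu_def, le_div_iff₀ (by positivity)]; linarith
    have hP2 := gauss_lb 2 (by norm_num)
    rw [← hC_def] at hP2
    have hval : (2:ℝ) - 2^3/6 + 2^5/40 - 2^7/336 + 2^9/3456 - 2^11/42240 + 2^13/599040 - 2^15/9676800
        = 269294/225225 := by norm_num
    rw [hval] at hP2
    have hsub : {z : ℝ | |z| ≤ (2:ℝ)} ⊆ {z : ℝ | |z| ≤ u} := fun z hz => le_trans hz hu2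
    have hmono : (gaussianReal 0 1 {z | |z| ≤ (2:ℝ)}).toReal ≤ (gaussianReal 0 1 {z | |z| ≤ u}).toReal :=
      ENNReal.toReal_mono (measure_ne_top _ _) (measure_mono hsub)
    have hPu : C * (2 * (269294/225225)) ≤ (gaussianReal 0 1 {z | |z| ≤ u}).toReal :=
      le_trans hP2 hmono
    have hκ_lb : 2*C*σ1*u * (269294/225225) ≤ κ := by
      rw [hκ_def, ha_eq]
      have h1 : (2*σ1*u)/2 * (C * (2 * (269294/225225)))
          ≤ (2*σ1*u)/2 * (gaussianReal 0 1 {z | |z| ≤ u}).toReal :=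
        mul_le_mul_of_nonneg_left hPu (by positivity)
      have h2 : 0 ≤ Real.sqrt (2/π) * σ1 * Real.exp (-(u^2) / 2) := by positivity
      nlinarith [h1, h2]
    have hL0 : 0 ≤ 2*C*σ1*u * (269294/225225) := by positivity
    have hκsq := pow_le_pow_left₀ hL0 hκ_lb 2
    have hL2 : (2*C*σ1*u * (269294/225225))^2 = 4 * (2*π)⁻¹ * σ1^2 * u^2 * ((269294:ℝ)/225225)^2 := by
      rw [show (2*C*σ1*u * ((269294:ℝ)/225225))^2 = 4 * C^2 * σ1^2 * u^2 * ((269294:ℝ)/225225)^2 by ring, hC2]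
    rw [hL2] at hκsq
    have hπ15 : π < 3.15 := Real.pi_lt_d2
    have key : π * u^2 / 10 + 2 + 2*u^2 ≤ 2 * ((269294:ℝ)/225225)^2 * u^2 := by
      nlinarith [sq_nonneg u, hu2, mul_le_mul_of_nonneg_right (le_of_lt hπ15) (sq_nonneg u)]
    have e1 : 4 * (2*π)⁻¹ * σ1^2 * u^2 * ((269294:ℝ)/225225)^2 - 2/π * (σ1^2 + a^2/4) - a^2/40
        = σ1^2 / π * (2 * ((269294:ℝ)/225225)^2 * u^2 - (π * u^2 / 10 + 2 + 2*u^2)) := by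
      rw [ha_eq]; field_simp; ring
    have hnn : 0 ≤ σ1^2 / π * (2 * ((269294:ℝ)/225225)^2 * u^2 - (π * u^2 / 10 + 2 + 2*u^2)) :=
      mul_nonneg (by positivity) (by linarith)
    linarith [hκsq, e1.ge, e1.le, hnn]
end
end
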